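/- Fix k ≥ 1 and p, q ∈ D(k). There exists n₀ such that for every integer n ≥ n₀ the Weingarten matrix entry is given by the absolutely convergent path expansion n^k · W_{kn}(p,q) = ∑_{l=0}^∞ (−1)^l ∑_P n^{−d(P)}, where the inner sum is over all paths P = (p₀, p₁, …, p_l) in D(k) with p₀ = p, p_l = q and p_{i−1} ≠ p_i for each 1 ≤ i ≤ l, and d(P) = ∑_{i=1}^l d(p_{i−1}, p_i). -/

import Mathlib

open scoped BigOperators

/-- Non-crossing pair partitions of {1,…,2k}: fixed-point-free non-crossing
involutions of `Fin (2*k)`. -/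
def NCPair (k : ℕ) : Type :=
  {p : Equiv.Perm (Fin (2 * k)) //
    (∀ x, p (p x) = x) ∧ (∀ x, p x ≠ x) ∧
    ∀ a b c d : Fin (2 * k), a < b → b < c → c < d → p a = c → p b = d → False}

instance (k : ℕ) : Fintype (NCPair k) := by unfold NCPair; infer_instance

instance (k : ℕ) : DecidableEq (NCPair k) := by unfold NCPair; infer_instance

/-- `loops p q`: the number of loops obtained by closing the composed diagram,
i.e. the number of orbits of the subgroup generated by `p` and `q` on `Fin (2*k)`. -/
noncomputable def loops {k : ℕ} (p q : NCPair k) : ℕ :=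
  Nat.card (MulAction.orbitRel.Quotient
    (↥(Subgroup.closure ({p.1, q.1} : Set (Equiv.Perm (Fin (2 * k)))))) (Fin (2 * k)))

/-- The Gram matrix `G_{kn}(p,q) = n^{l(p,q)}`. -/
noncomputable def Gram (k n : ℕ) : Matrix (NCPair k) (NCPair k) ℝ :=
  fun p q => (n : ℝ) ^ loops p q

/-- The loop distance `d(p,q) = k - l(p,q)`. -/
noncomputable def loopDist {k : ℕ} (p q : NCPair k) : ℕ := k - loops p q

/-- The distance along a path P = (p₀,…,p_l): d(P) = ∑ d(p_{i-1}, p_i). -/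
noncomputable def pathDist {k l : ℕ} (P : Fin (l + 1) → NCPair k) : ℕ :=
  ∑ i : Fin l, loopDist (P i.castSucc) (P i.succ)

open Classical in
/-- The inner sum ∑_P n^{-d(P)} over all paths of length l from p to q
(consecutive entries distinct). -/
noncomputable def pathTerm (k n : ℕ) (p q : NCPair k) (l : ℕ) : ℝ :=
  ∑ P ∈ Finset.univ.filter
      (fun P : Fin (l + 1) → NCPair k =>
        P 0 = p ∧ P (Fin.last l) = q ∧ ∀ i : Fin l, P i.castSucc ≠ P i.succ),
    ((n : ℝ)⁻¹) ^ pathDist P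

section Aux

open scoped Pointwise

lemma orbit_subset_of_stable {α G : Type*} [Group G] [MulAction G α] (S : Set G) (T : Set α)
    (hS : ∀ s ∈ S, s • T = T) {x : α} (hx : x ∈ T) :
    MulAction.orbit (Subgroup.closure S) x ⊆ T := by
  have hle : Subgroup.closure S ≤ MulAction.stabilizer G T := by
    rw [Subgroup.closure_le]; exact fun s hs => hS s hs
  rintro y ⟨g, rfl⟩
  have h : (g : G) • T = T := hle g.2
  have : (g : G) • x ∈ (g : G) • T := Set.smul_mem_smul_set hx
  rwa [h] at this

-- orbit of x under ⟨p⟩ is {x, p x}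
lemma orbit_pair {k : ℕ} (p : NCPair k) (x : Fin (2 * k)) :
    MulAction.orbit (Subgroup.closure ({p.1} : Set (Equiv.Perm (Fin (2 * k))))) x
      = {x, p.1 x} := by
  apply Set.Subset.antisymm
  · apply orbit_subset_of_stable
    · rintro s rfl
      ext y
      simp only [Set.smul_set_insert, Set.smul_set_singleton, Equiv.Perm.smul_def,
        Set.mem_insert_iff, Set.mem_singleton_iff, p.2.1 x]
      tauto
    · exact Set.mem_insert _ _
  · rintro y (rfl | rfl)
    · exact MulAction.mem_orbit_self _
    · have hp : p.1 ∈ Subgroup.closure ({p.1} : Set (Equiv.Perm (Fin (2 * k)))) :=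
        Subgroup.subset_closure rfl
      exact MulAction.mem_orbit x (⟨p.1, hp⟩ : ↥(Subgroup.closure ({p.1} : Set (Equiv.Perm (Fin (2 * k))))))

lemma card_fin_eq_sum_orbits (k : ℕ) (G : Type*) [Group G] [MulAction G (Fin (2 * k))]
    [Fintype (MulAction.orbitRel.Quotient G (Fin (2 * k)))] :
    2 * k = ∑ ω : MulAction.orbitRel.Quotient G (Fin (2 * k)),
      Nat.card (MulAction.orbit G ω.out) := by
  classical
  letI : ∀ ω : MulAction.orbitRel.Quotient G (Fin (2 * k)),
      Fintype (MulAction.orbit G ω.out) := fun ω => Fintype.ofFinite _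
  calc 2 * k = Fintype.card (Fin (2 * k)) := by simp
    _ = Fintype.card (Σ ω : MulAction.orbitRel.Quotient G (Fin (2 * k)),
          MulAction.orbit G ω.out) := Fintype.card_congr (MulAction.selfEquivSigmaOrbits G _)
    _ = ∑ ω : MulAction.orbitRel.Quotient G (Fin (2 * k)),
          Fintype.card (MulAction.orbit G ω.out) := Fintype.card_sigma
    _ = _ := by simp [Nat.card_eq_fintype_card]

lemma loops_self {k : ℕ} (p : NCPair k) : loops p p = k := by
  classical
  unfold loops
  rw [Set.pair_eq_singleton]
  letI : Fintype (MulAction.orbitRel.Quotient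
      (↥(Subgroup.closure ({p.1} : Set (Equiv.Perm (Fin (2 * k)))))) (Fin (2 * k))) :=
    Fintype.ofFinite _
  have hsum := card_fin_eq_sum_orbits k
    (↥(Subgroup.closure ({p.1} : Set (Equiv.Perm (Fin (2 * k))))))
  have horb : ∀ ω : MulAction.orbitRel.Quotient
      (↥(Subgroup.closure ({p.1} : Set (Equiv.Perm (Fin (2 * k)))))) (Fin (2 * k)),
      Nat.card (MulAction.orbit (↥(Subgroup.closure ({p.1} : Set (Equiv.Perm (Fin (2 * k)))))) ω.out) = 2 := by
    intro ω
    have := orbit_pair p ω.out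
    rw [this, Nat.card_coe_set_eq, Set.ncard_pair (Ne.symm (p.2.2.1 ω.out))]
  rw [Finset.sum_congr rfl (fun ω _ => horb ω), Finset.sum_const, Finset.card_univ,
    smul_eq_mul] at hsum
  rw [Nat.card_eq_fintype_card]
  omega

lemma loops_lt_of_ne {k : ℕ} (p q : NCPair k) (hpq : p ≠ q) : loops p q < k := by
  classical
  unfold loops
  letI : Fintype (MulAction.orbitRel.Quotient
      (↥(Subgroup.closure ({p.1, q.1} : Set (Equiv.Perm (Fin (2 * k)))))) (Fin (2 * k))) :=
    Fintype.ofFinite _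
  set H := Subgroup.closure ({p.1, q.1} : Set (Equiv.Perm (Fin (2 * k)))) with hH
  have hp : p.1 ∈ H := Subgroup.subset_closure (Set.mem_insert _ _)
  have hq : q.1 ∈ H := Subgroup.subset_closure (Set.mem_insert_of_mem _ rfl)
  have hsum := card_fin_eq_sum_orbits k (↥H)
  -- witness x with p x ≠ q x
  have hne : p.1 ≠ q.1 := fun h => hpq (Subtype.ext h)
  obtain ⟨x, hx⟩ : ∃ x, p.1 x ≠ q.1 x := by
    by_contra h
    push_neg at h
    exact hne (Equiv.ext h)
  set ω₀ : MulAction.orbitRel.Quotient (↥H) (Fin (2 * k)) := ⟦x⟧ with hω₀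
  -- each orbit has at least 2 elements
  have h2 : ∀ ω : MulAction.orbitRel.Quotient (↥H) (Fin (2 * k)),
      2 ≤ Nat.card (MulAction.orbit (↥H) ω.out) := by
    intro ω
    have hsub : ({ω.out, p.1 ω.out} : Set (Fin (2 * k))) ⊆ MulAction.orbit (↥H) ω.out := by
      rintro y (rfl | rfl)
      · exact MulAction.mem_orbit_self _
      · exact MulAction.mem_orbit _ (⟨p.1, hp⟩ : ↥H)
    calc 2 = ({ω.out, p.1 ω.out} : Set (Fin (2 * k))).ncard :=
          (Set.ncard_pair (Ne.symm (p.2.2.1 ω.out))).symm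
      _ ≤ (MulAction.orbit (↥H) ω.out).ncard :=
          Set.ncard_le_ncard hsub (Set.toFinite _)
      _ = Nat.card (MulAction.orbit (↥H) ω.out) := (Nat.card_coe_set_eq _).symm
  -- the special orbit has at least 3 elements
  have h3 : 3 ≤ Nat.card (MulAction.orbit (↥H) ω₀.out) := by
    have horbeq : MulAction.orbit (↥H) ω₀.out = MulAction.orbit (↥H) x := by
      rw [MulAction.orbit_eq_iff]
      have := Quotient.mk_out (s := MulAction.orbitRel (↥H) (Fin (2 * k))) x
      rwa [MulAction.orbitRel_apply] at this
    rw [horbeq]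
    have hsub : ({x, p.1 x, q.1 x} : Set (Fin (2 * k))) ⊆ MulAction.orbit (↥H) x := by
      rintro y (rfl | rfl | rfl)
      · exact MulAction.mem_orbit_self _
      · exact MulAction.mem_orbit _ (⟨p.1, hp⟩ : ↥H)
      · exact MulAction.mem_orbit _ (⟨q.1, hq⟩ : ↥H)
    have hcard : ({x, p.1 x, q.1 x} : Set (Fin (2 * k))).ncard = 3 := by
      rw [Set.ncard_insert_of_notMem (by
        simp only [Set.mem_insert_iff, Set.mem_singleton_iff]
        push_neg
        exact ⟨Ne.symm (p.2.2.1 x), Ne.symm (q.2.2.1 x)⟩) (Set.toFinite _),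
        Set.ncard_pair (by
          intro h
          exact hx (by rw [h]))]
    calc 3 = ({x, p.1 x, q.1 x} : Set (Fin (2 * k))).ncard := hcard.symm
      _ ≤ (MulAction.orbit (↥H) x).ncard := Set.ncard_le_ncard hsub (Set.toFinite _)
      _ = Nat.card (MulAction.orbit (↥H) x) := (Nat.card_coe_set_eq _).symm
  -- combine
  have hbound : ∀ ω : MulAction.orbitRel.Quotient (↥H) (Fin (2 * k)),
      (if ω = ω₀ then 3 else 2) ≤ Nat.card (MulAction.orbit (↥H) ω.out) := by
    intro ω
    by_cases h : ω = ω₀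
    · simpa [h] using h3
    · simpa [h] using h2 ω
  have hge : ∑ ω : MulAction.orbitRel.Quotient (↥H) (Fin (2 * k)),
      (if ω = ω₀ then 3 else 2) ≤ 2 * k := by
    exact le_of_le_of_eq (Finset.sum_le_sum (fun ω _ => hbound ω)) hsum.symm
  have hval : ∑ ω : MulAction.orbitRel.Quotient (↥H) (Fin (2 * k)),
      (if ω = ω₀ then 3 else 2)
      = 2 * Fintype.card (MulAction.orbitRel.Quotient (↥H) (Fin (2 * k))) + 1 := by
    have : ∀ ω : MulAction.orbitRel.Quotient (↥H) (Fin (2 * k)),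
        (if ω = ω₀ then 3 else 2) = 2 + (if ω = ω₀ then 1 else 0) := by
      intro ω; by_cases h : ω = ω₀ <;> simp [h]
    rw [Finset.sum_congr rfl (fun ω _ => this ω), Finset.sum_add_distrib,
      Finset.sum_const, Finset.card_univ, Finset.sum_ite_eq' Finset.univ ω₀ (fun _ => 1)]
    simp [mul_comm]
  rw [Nat.card_eq_fintype_card]
  omega

-- the step matrix
noncomputable def stepM (k n : ℕ) : Matrix (NCPair k) (NCPair k) ℝ :=
  fun p q => if p = q then 0 else ((n : ℝ)⁻¹) ^ loopDist p q

open Classical in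
lemma pathTerm_expand (k n m : ℕ) (a b : NCPair k) : pathTerm k n a b m =
    ∑ P : Fin (m + 1) → NCPair k,
      if (P 0 = a ∧ P (Fin.last m) = b ∧ ∀ i : Fin m, P i.castSucc ≠ P i.succ)
      then ((n : ℝ)⁻¹) ^ pathDist P else 0 := by
  rw [pathTerm, Finset.sum_filter]

lemma pathTerm_zero (k n : ℕ) (p q : NCPair k) :
    pathTerm k n p q 0 = if p = q then 1 else 0 := by
  classical
  unfold pathTerm
  have hset : (Finset.univ.filter
      (fun P : Fin 1 → NCPair k =>
        P 0 = p ∧ P (Fin.last 0) = q ∧ ∀ i : Fin 0, P i.castSucc ≠ P i.succ))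
      = if p = q then {fun _ : Fin 1 => p} else ∅ := by
    ext P
    by_cases h : p = q
    · subst h
      simp only [Finset.mem_filter, Finset.mem_univ, true_and, eq_self_iff_true, if_true,
        Finset.mem_singleton]
      constructor
      · rintro ⟨h1, -, -⟩
        funext i
        have : i = 0 := Subsingleton.elim _ _
        rw [this, h1]
      · rintro rfl
        exact ⟨rfl, rfl, fun i => i.elim0⟩
    · simp only [Finset.mem_filter, Finset.mem_univ, true_and, if_neg h,
        Finset.notMem_empty, iff_false]
      rintro ⟨h1, h2, -⟩
      exact h (by rw [← h1, ← h2]; rfl)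
  rw [hset]
  by_cases h : p = q
  · rw [if_pos h, if_pos h, Finset.sum_singleton]
    unfold pathDist
    simp
  · rw [if_neg h, if_neg h, Finset.sum_empty]

lemma pathTerm_succ (k n : ℕ) (p q : NCPair k) (l : ℕ) :
    pathTerm k n p q (l + 1) = ∑ r : NCPair k, pathTerm k n p r l * stepM k n r q := by
  classical
  rw [pathTerm_expand]
  rw [← Equiv.sum_comp (Fin.snocEquiv (fun _ : Fin (l + 2) => NCPair k))]
  -- LHS is now ∑ x, ∑ P', F (snoc P' x)
  have key : ∀ (x : NCPair k) (P' : Fin (l + 1) → NCPair k),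
      (if ((Fin.snoc P' x : Fin (l + 2) → NCPair k) 0 = p ∧
          (Fin.snoc P' x : Fin (l + 2) → NCPair k) (Fin.last (l + 1)) = q ∧
          ∀ i : Fin (l + 1), (Fin.snoc P' x : Fin (l + 2) → NCPair k) i.castSucc ≠
            (Fin.snoc P' x : Fin (l + 2) → NCPair k) i.succ)
        then ((n : ℝ)⁻¹) ^ pathDist (Fin.snoc P' x : Fin (l + 2) → NCPair k) else 0)
      = if x = q then
          (if (P' 0 = p ∧ ∀ i : Fin l, P' i.castSucc ≠ P' i.succ)
            then ((n : ℝ)⁻¹) ^ pathDist P' else 0) * stepM k n (P' (Fin.last l)) q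
        else 0 := by
    intro x P'
    have h0 : (Fin.snoc P' x : Fin (l + 2) → NCPair k) 0 = P' 0 := by
      rw [← Fin.castSucc_zero, Fin.snoc_castSucc]
    have hlast : (Fin.snoc P' x : Fin (l + 2) → NCPair k) (Fin.last (l + 1)) = x :=
      Fin.snoc_last _ _
    have hforall : (∀ i : Fin (l + 1), (Fin.snoc P' x : Fin (l + 2) → NCPair k) i.castSucc ≠
          (Fin.snoc P' x : Fin (l + 2) → NCPair k) i.succ)
        ↔ (∀ i : Fin l, P' i.castSucc ≠ P' i.succ) ∧ P' (Fin.last l) ≠ x := by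
      rw [Fin.forall_fin_succ']
      apply and_congr
      · apply forall_congr'
        intro i
        rw [Fin.succ_castSucc, Fin.snoc_castSucc, Fin.snoc_castSucc]
      · rw [Fin.succ_last, Fin.snoc_castSucc, Fin.snoc_last]
    have hdist : pathDist (Fin.snoc P' x : Fin (l + 2) → NCPair k)
        = pathDist P' + loopDist (P' (Fin.last l)) x := by
      unfold pathDist
      rw [Fin.sum_univ_castSucc]
      congr 1
      · apply Finset.sum_congr rfl
        intro i _
        rw [Fin.succ_castSucc, Fin.snoc_castSucc, Fin.snoc_castSucc]
      · rw [Fin.succ_last, Fin.snoc_castSucc, Fin.snoc_last]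
    rw [h0, hlast]
    by_cases hx : x = q
    · subst hx
      rw [if_pos rfl]
      by_cases hmain : P' 0 = p ∧ ∀ i : Fin l, P' i.castSucc ≠ P' i.succ
      · rw [if_pos hmain]
        by_cases hstep : P' (Fin.last l) = x
        · rw [if_neg, stepM, if_pos hstep, mul_zero]
          rintro ⟨-, -, hf⟩
          exact (hforall.mp hf).2 hstep
        · rw [if_pos ⟨hmain.1, rfl, hforall.mpr ⟨hmain.2, hstep⟩⟩, hdist, pow_add,
            stepM, if_neg hstep]
      · rw [if_neg, if_neg hmain, zero_mul]
        rintro ⟨h1, -, hf⟩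
        exact hmain ⟨h1, (hforall.mp hf).1⟩
    · rw [if_neg hx, if_neg]
      rintro ⟨-, h2, -⟩
      exact hx h2
  calc ∑ y : NCPair k × (Fin (l + 1) → NCPair k),
        (if ((Fin.snocEquiv (fun _ : Fin (l + 2) => NCPair k)) y 0 = p ∧
            (Fin.snocEquiv (fun _ : Fin (l + 2) => NCPair k)) y (Fin.last (l + 1)) = q ∧
            ∀ i : Fin (l + 1), (Fin.snocEquiv (fun _ : Fin (l + 2) => NCPair k)) y i.castSucc ≠
              (Fin.snocEquiv (fun _ : Fin (l + 2) => NCPair k)) y i.succ)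
          then ((n : ℝ)⁻¹) ^ pathDist ((Fin.snocEquiv (fun _ : Fin (l + 2) => NCPair k)) y) else 0)
      = ∑ x : NCPair k, ∑ P' : Fin (l + 1) → NCPair k,
        (if x = q then
          (if (P' 0 = p ∧ ∀ i : Fin l, P' i.castSucc ≠ P' i.succ)
            then ((n : ℝ)⁻¹) ^ pathDist P' else 0) * stepM k n (P' (Fin.last l)) q
        else 0) := by
        rw [Fintype.sum_prod_type]
        exact Finset.sum_congr rfl fun x _ => Finset.sum_congr rfl fun P' _ => key x P'
    _ = ∑ P' : Fin (l + 1) → NCPair k,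
        (if (P' 0 = p ∧ ∀ i : Fin l, P' i.castSucc ≠ P' i.succ)
          then ((n : ℝ)⁻¹) ^ pathDist P' else 0) * stepM k n (P' (Fin.last l)) q := by
        have hpull : ∀ x : NCPair k, (∑ P' : Fin (l + 1) → NCPair k,
            if x = q then
              (if (P' 0 = p ∧ ∀ i : Fin l, P' i.castSucc ≠ P' i.succ)
                then ((n : ℝ)⁻¹) ^ pathDist P' else 0) * stepM k n (P' (Fin.last l)) q
            else 0)
            = if x = q then (∑ P' : Fin (l + 1) → NCPair k,
              (if (P' 0 = p ∧ ∀ i : Fin l, P' i.castSucc ≠ P' i.succ)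
                then ((n : ℝ)⁻¹) ^ pathDist P' else 0) * stepM k n (P' (Fin.last l)) q)
            else 0 := by
          intro x; by_cases h : x = q <;> simp [h]
        rw [Finset.sum_congr rfl fun x _ => hpull x,
          Finset.sum_ite_eq' Finset.univ q]
        simp
    _ = ∑ P' : Fin (l + 1) → NCPair k, ∑ r : NCPair k,
        (if r = P' (Fin.last l) then
          (if (P' 0 = p ∧ ∀ i : Fin l, P' i.castSucc ≠ P' i.succ)
            then ((n : ℝ)⁻¹) ^ pathDist P' else 0) * stepM k n r q else 0) := by
        apply Finset.sum_congr rfl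
        intro P' _
        rw [Finset.sum_ite_eq' Finset.univ (P' (Fin.last l))]
        simp
    _ = ∑ r : NCPair k, pathTerm k n p r l * stepM k n r q := by
        rw [Finset.sum_comm]
        apply Finset.sum_congr rfl
        intro r _
        rw [pathTerm_expand, Finset.sum_mul]
        apply Finset.sum_congr rfl
        intro P' _
        by_cases h1 : r = P' (Fin.last l)
        · subst h1
          rw [if_pos rfl]
          by_cases h2 : P' 0 = p ∧ ∀ i : Fin l, P' i.castSucc ≠ P' i.succ
          · rw [if_pos h2, if_pos ⟨h2.1, rfl, h2.2⟩]
          · rw [if_neg h2, if_neg, zero_mul]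
            rintro ⟨ha, -, hc⟩
            exact h2 ⟨ha, hc⟩
        · rw [if_neg h1, if_neg, zero_mul]
          rintro ⟨-, hb, -⟩
          exact h1 hb.symm
  -- done; but need to match LHS shape

lemma pathTerm_eq_pow (k n : ℕ) (p q : NCPair k) (l : ℕ) :
    pathTerm k n p q l = (stepM k n ^ l) p q := by
  induction l generalizing p q with
  | zero => rw [pathTerm_zero, pow_zero, Matrix.one_apply]
  | succ l ih =>
    rw [pathTerm_succ, pow_succ, Matrix.mul_apply]
    exact Finset.sum_congr rfl fun r _ => by rw [ih]

section Analysis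

variable {k n : ℕ}


lemma stepM_nonneg (p q : NCPair k) : 0 ≤ stepM k n p q := by
  unfold stepM; split <;> positivity

lemma stepM_le (hn : 1 ≤ n) (p q : NCPair k) : stepM k n p q ≤ (n : ℝ)⁻¹ := by
  have hn1 : (1 : ℝ) ≤ (n : ℝ) := by exact_mod_cast hn
  have hinv1 : (n : ℝ)⁻¹ ≤ 1 := inv_le_one_of_one_le₀ hn1
  have hinv0 : 0 ≤ (n : ℝ)⁻¹ := by positivity
  unfold stepM
  split
  · exact hinv0
  · rename_i h
    have hd : 1 ≤ loopDist p q := by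
      have := loops_lt_of_ne p q h
      unfold loopDist; omega
    calc ((n : ℝ)⁻¹) ^ loopDist p q ≤ ((n : ℝ)⁻¹) ^ 1 :=
          pow_le_pow_of_le_one hinv0 hinv1 hd
      _ = (n : ℝ)⁻¹ := pow_one _

lemma pow_entry_nonneg (l : ℕ) (p q : NCPair k) : 0 ≤ (stepM k n ^ l) p q := by
  induction l generalizing p q with
  | zero => rw [pow_zero, Matrix.one_apply]; split <;> norm_num
  | succ l ih =>
    rw [pow_succ, Matrix.mul_apply]
    exact Finset.sum_nonneg fun r _ => mul_nonneg (ih p r) (stepM_nonneg _ _)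

lemma pow_entry_le (hn : 1 ≤ n) (l : ℕ) (p q : NCPair k) :
    (stepM k n ^ l) p q ≤ ((Fintype.card (NCPair k) : ℝ) * (n : ℝ)⁻¹) ^ l := by
  induction l generalizing p q with
  | zero => rw [pow_zero, pow_zero, Matrix.one_apply]; split <;> norm_num
  | succ l ih =>
    have hinv0 : 0 ≤ (n : ℝ)⁻¹ := by positivity
    rw [pow_succ, Matrix.mul_apply]
    calc ∑ r : NCPair k, (stepM k n ^ l) p r * stepM k n r q
        ≤ ∑ _r : NCPair k, ((Fintype.card (NCPair k) : ℝ) * (n : ℝ)⁻¹) ^ l * (n : ℝ)⁻¹ :=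
          Finset.sum_le_sum fun r _ =>
            mul_le_mul (ih p r) (stepM_le hn r q) (stepM_nonneg _ _)
              (by positivity)
      _ = ((Fintype.card (NCPair k) : ℝ) * (n : ℝ)⁻¹) ^ (l + 1) := by
          rw [Finset.sum_const, Finset.card_univ, nsmul_eq_mul]
          ring

end Analysis


end Aux

/-- Path expansion of the Weingarten matrix: for n large enough,
n^k · W_{kn}(p,q) = ∑_{l=0}^∞ (−1)^l ∑_P n^{−d(P)}, absolutely convergent. -/


theorem weingarten_path_expansion (k : ℕ) (hk : 1 ≤ k) (p q : NCPair k) :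
    ∃ n₀ : ℕ, ∀ n : ℕ, n₀ ≤ n →
      Summable (fun l : ℕ => |(-1 : ℝ) ^ l * pathTerm k n p q l|) ∧
      (n : ℝ) ^ k * (Gram k n)⁻¹ p q = ∑' l : ℕ, (-1 : ℝ) ^ l * pathTerm k n p q l := by
  classical
  refine ⟨Fintype.card (NCPair k) + 1, fun n hn => ?_⟩
  set N : ℕ := Fintype.card (NCPair k) with hN
  have hNpos : 0 < N := Fintype.card_pos_iff.mpr ⟨p⟩
  have hn1 : 1 ≤ n := by omega
  have hn0 : (0 : ℝ) < (n : ℝ) := by exact_mod_cast Nat.lt_of_lt_of_le (by omega) hn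
  have hnne : (n : ℝ) ≠ 0 := ne_of_gt hn0
  set c : ℝ := (N : ℝ) * (n : ℝ)⁻¹ with hc
  have hc0 : 0 ≤ c := by positivity
  have hc1 : c < 1 := by
    rw [hc, inv_eq_one_div, mul_one_div, div_lt_one hn0]
    exact_mod_cast Nat.lt_of_lt_of_le (Nat.lt_succ_self N) hn
  have hgeom : Summable (fun l : ℕ => c ^ l) := summable_geometric_of_lt_one hc0 hc1
  -- summability of the entry series for any pair of endpoints
  have hsumm : ∀ a b : NCPair k,
      Summable (fun l : ℕ => (-1 : ℝ) ^ l * (stepM k n ^ l) a b) := by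
    intro a b
    apply Summable.of_abs
    apply Summable.of_nonneg_of_le (fun l => abs_nonneg _) _ hgeom
    intro l
    rw [abs_mul, abs_pow, abs_neg, abs_one, one_pow, one_mul,
      abs_of_nonneg (pow_entry_nonneg l a b)]
    exact pow_entry_le hn1 l a b
  -- the entry series
  set S : NCPair k → ℝ := fun r => ∑' l : ℕ, (-1 : ℝ) ^ l * (stepM k n ^ l) r q with hS
  -- Gram in terms of stepM
  have hloops_le : ∀ a b : NCPair k, loops a b ≤ k := by
    intro a b
    by_cases h : a = b
    · subst h; rw [loops_self]
    · exact le_of_lt (loops_lt_of_ne a b h)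
  have hGram : ∀ a b : NCPair k,
      Gram k n a b = (n : ℝ) ^ k * ((1 : Matrix (NCPair k) (NCPair k) ℝ) a b + stepM k n a b) := by
    intro a b
    by_cases h : a = b
    · subst h
      rw [Matrix.one_apply_eq]
      unfold Gram stepM
      rw [if_pos rfl, loops_self]
      ring
    · rw [Matrix.one_apply_ne h]
      unfold Gram stepM
      rw [if_neg h, zero_add, inv_pow, eq_comm, mul_inv_eq_iff_eq_mul₀ (by positivity),
        ← pow_add]
      congr 1
      have := hloops_le a b
      unfold loopDist
      omega
  -- the candidate inverse
  set B : Matrix (NCPair k) (NCPair k) ℝ :=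
    fun a b => ((n : ℝ) ^ k)⁻¹ * ∑' l : ℕ, (-1 : ℝ) ^ l * (stepM k n ^ l) a b with hB
  have hk0 : ((n : ℝ) ^ k) ≠ 0 := by positivity
  have hmul : Gram k n * B = 1 := by
    ext a b
    rw [Matrix.mul_apply]
    have step1 : ∀ r : NCPair k, Gram k n a r * B r b =
        ((1 : Matrix (NCPair k) (NCPair k) ℝ) a r + stepM k n a r) *
          ∑' l : ℕ, (-1 : ℝ) ^ l * (stepM k n ^ l) r b := by
      intro r
      rw [hGram a r]
      show (n : ℝ) ^ k * _ * (((n : ℝ) ^ k)⁻¹ * _) = _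
      field_simp
    rw [Finset.sum_congr rfl fun r _ => step1 r]
    rw [Finset.sum_congr rfl fun r _ => add_mul _ _ _, Finset.sum_add_distrib]
    have h1 : ∑ r : NCPair k, (1 : Matrix (NCPair k) (NCPair k) ℝ) a r *
        ∑' l : ℕ, (-1 : ℝ) ^ l * (stepM k n ^ l) r b
        = ∑' l : ℕ, (-1 : ℝ) ^ l * (stepM k n ^ l) a b := by
      simp only [Matrix.one_apply, ite_mul, one_mul, zero_mul]
      exact Finset.sum_ite_eq Finset.univ a _ |>.trans (by simp)
    have h2 : ∑ r : NCPair k, stepM k n a r *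
        ∑' l : ℕ, (-1 : ℝ) ^ l * (stepM k n ^ l) r b
        = ∑' l : ℕ, (-1 : ℝ) ^ l * (stepM k n ^ (l + 1)) a b := by
      have hstep : ∀ r : NCPair k, stepM k n a r *
          ∑' l : ℕ, (-1 : ℝ) ^ l * (stepM k n ^ l) r b
          = ∑' l : ℕ, stepM k n a r * ((-1 : ℝ) ^ l * (stepM k n ^ l) r b) :=
        fun r => (tsum_mul_left).symm
      rw [Finset.sum_congr rfl fun r _ => hstep r]
      rw [← Summable.tsum_finsetSum (fun r _ => (hsumm r b).mul_left _)]
      apply tsum_congr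
      intro l
      rw [pow_succ' (stepM k n) l, Matrix.mul_apply, Finset.mul_sum]
      apply Finset.sum_congr rfl
      intro r _
      ring
    rw [h1, h2]
    have hshift := Summable.tsum_eq_zero_add (hsumm a b)
    have hneg : ∑' l : ℕ, (-1 : ℝ) ^ (l + 1) * (stepM k n ^ (l + 1)) a b
        = - ∑' l : ℕ, (-1 : ℝ) ^ l * (stepM k n ^ (l + 1)) a b := by
      rw [← tsum_neg]
      apply tsum_congr
      intro l
      rw [pow_succ]
      ring
    rw [hneg] at hshift
    rw [Matrix.one_apply]
    have : (-1 : ℝ) ^ (0 : ℕ) * (stepM k n ^ (0 : ℕ)) a b = if a = b then 1 else 0 := by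
      rw [pow_zero, pow_zero, Matrix.one_apply, one_mul]
    linarith [hshift, this.symm.le, this.le]
  have hinv : (Gram k n)⁻¹ = B := Matrix.inv_eq_right_inv hmul
  constructor
  · have heq : (fun l : ℕ => |(-1 : ℝ) ^ l * pathTerm k n p q l|)
        = fun l : ℕ => |(-1 : ℝ) ^ l * (stepM k n ^ l) p q| := by
      funext l; rw [pathTerm_eq_pow]
    rw [heq]
    exact (hsumm p q).abs
  · rw [hinv]
    show (n : ℝ) ^ k * (((n : ℝ) ^ k)⁻¹ * _) = _
    rw [← mul_assoc, mul_inv_cancel₀ hk0, one_mul]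
    exact tsum_congr fun l => by rw [pathTerm_eq_pow]
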